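/- Let b, ξ, H be real numbers with H ≠ 0, 3+ξ ≠ 0, 1+ξ+b²/6 ≠ 0, 1 - b²/4 ≠ 0 and b² ≠ 10, and define A = (1/H²)·[ (4ξ+6+b²/2)/(3(3+ξ)(1+ξ+b²/6)) + 2(3+ξ)/((3+ξ)²(1-b²/4)) ]. Then A = 0 if and only if ξ = (24 - b⁴/4)/(2b² - 20). In particular, for b = 0 this condition reduces to ξ = -6/5, while at ξ = -6/5 one has A ≠ 0 unless b² = 48/5; hence a nonzero anisotropy shifts, but does not remove, the zero of the anticurvature scalar. -/

import Mathlib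

/-- In a Bianchi I background with anisotropy b = β', the anticurvature scalar
A vanishes iff ξ = (24 - b⁴/4)/(2b² - 20); for b = 0 this reduces to ξ = -6/5,
while at ξ = -6/5 a nonzero anisotropy with b² ≠ 48/5 gives A ≠ 0: the
anisotropy shifts, but does not remove, the zero of A. -/
theorem stmt2 (b ξ H : ℝ) (hH : H ≠ 0) (h1 : 3 + ξ ≠ 0)
    (h2 : 1 + ξ + b^2/6 ≠ 0) (h3 : 1 - b^2/4 ≠ 0) (h4 : b^2 ≠ 10) :
    let A := (1/H^2) * ((4*ξ + 6 + b^2/2)/(3*(3 + ξ)*(1 + ξ + b^2/6))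
      + 2*(3 + ξ)/((3 + ξ)^2*(1 - b^2/4)))
    (A = 0 ↔ ξ = (24 - b^4/4)/(2*b^2 - 20)) ∧
    (b = 0 → (24 - b^4/4)/(2*b^2 - 20) = -6/5) ∧
    (ξ = -6/5 → b ≠ 0 → b^2 ≠ 48/5 → A ≠ 0) := by
  have h5 : 2*b^2 - 20 ≠ 0 := by intro h; apply h4; linarith
  have hH2 : H^2 ≠ 0 := pow_ne_zero 2 hH
  have ha : (1 + ξ)*6 + b^2 ≠ 0 := by intro h; apply h2; linarith
  have hb4 : (4:ℝ) - b^2 ≠ 0 := by intro h; apply h3; linarith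
  intro A
  have key : A = 0 ↔ ξ = (24 - b^4/4)/(2*b^2 - 20) := by
    show (1/H^2) * _ = 0 ↔ _
    rw [mul_eq_zero, or_iff_right (one_div_ne_zero hH2), eq_div_iff h5]
    constructor
    · intro h
      field_simp [h1, ha, hb4, (by intro h; apply ha; linarith : 6 * (1 + ξ) + b ^ 2 ≠ 0)] at h
      rw [div_add' _ _ _ (by intro h; apply ha; linarith : 6 * (1 + ξ) + b ^ 2 ≠ 0),
        div_eq_iff (by intro h; apply ha; linarith : 6 * (1 + ξ) + b ^ 2 ≠ 0)] at h
      have h7 : (3+ξ)^2 * ((80-8*b^2)*ξ + 96 - b^4) = 0 := by linear_combination (3+ξ)^2/6 * h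
      have h8 := (mul_eq_zero.mp h7).resolve_left (pow_ne_zero 2 h1)
      linear_combination -h8/4
    · intro h
      field_simp [h1, ha, hb4, (by intro h; apply ha; linarith : 6 * (1 + ξ) + b ^ 2 ≠ 0)]
      rw [div_add' _ _ _ (by intro h; apply ha; linarith : 6 * (1 + ξ) + b ^ 2 ≠ 0),
        div_eq_iff (by intro h; apply ha; linarith : 6 * (1 + ξ) + b ^ 2 ≠ 0)]
      linear_combination (-24) * h
  refine ⟨key, ?_, ?_⟩
  · rintro rfl; norm_num
  · intro hx hb hb2
    rw [Ne, key, hx]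
    have hbpos : 0 < b^2 := by positivity
    intro h
    rw [eq_div_iff h5] at h
    apply hb2
    nlinarith [hbpos]
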